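/- Let B ∈ ℝ^{ℓ×ℓ}, C ∈ ℝ^{m×m}, and W ∈ ℝ^{n×m} with orthonormal columns (n ≥ m). Then sep_{(2,∞),W}(B, WCW^T) ≥ (1/√n) sep_F(B, C), where sep_{(2,∞),W}(B, M) := inf{‖ZB − MZ‖_{2,∞} : Z = WX, X ∈ ℝ^{m×ℓ}, ‖Z‖_{2,∞} = 1} and sep_F(B, C) := inf{‖XB − CX‖_F : ‖X‖_F = 1}. -/

import Mathlib

open Matrix

noncomputable def rnorm {k : ℕ} (v : Fin k → ℝ) : ℝ := Real.sqrt (∑ j, v j ^ 2)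

/-- two-to-infinity norm: maximum Euclidean norm of the rows -/
noncomputable def twoInf {n k : ℕ} (B : Matrix (Fin n) (Fin k) ℝ) : ℝ := ⨆ i, rnorm (B i)

/-- Frobenius norm -/
noncomputable def frob {n k : ℕ} (B : Matrix (Fin n) (Fin k) ℝ) : ℝ :=
  Real.sqrt (∑ i, ∑ j, B i j ^ 2)

/-- maximum absolute row-sum norm -/
noncomputable def rowSumNorm {n k : ℕ} (B : Matrix (Fin n) (Fin k) ℝ) : ℝ := ⨆ i, ∑ j, |B i j|

/-- spectral norm: operator norm induced by Euclidean vector norms -/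
noncomputable def specNorm {m n : ℕ} (B : Matrix (Fin m) (Fin n) ℝ) : ℝ :=
  ‖(Matrix.toEuclideanLin B).toContinuousLinearMap‖

/-- vector sup norm -/
noncomputable def vecInf {n : ℕ} (v : Fin n → ℝ) : ℝ := ⨆ i, |v i|

/-- smallest singular value, via σ_min(B) = inf over unit v of ‖vᵀB‖₂ -/
noncomputable def sigmaMin {l : ℕ} (B : Matrix (Fin l) (Fin l) ℝ) : ℝ :=
  ⨅ v : {v : Fin l → ℝ // rnorm v = 1}, rnorm (Matrix.vecMul v.1 B)
lemma rnorm_nonneg {k : ℕ} (v : Fin k → ℝ) : 0 ≤ rnorm v := Real.sqrt_nonneg _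
lemma frob_nonneg {n k : ℕ} (A : Matrix (Fin n) (Fin k) ℝ) : 0 ≤ frob A := Real.sqrt_nonneg _
lemma twoInf_nonneg {n k : ℕ} (A : Matrix (Fin n) (Fin k) ℝ) : 0 ≤ twoInf A :=
  Real.iSup_nonneg fun i => rnorm_nonneg _

lemma rnorm_sq {k : ℕ} (v : Fin k → ℝ) : rnorm v ^ 2 = ∑ j, v j ^ 2 :=
  Real.sq_sqrt (Finset.sum_nonneg fun _ _ => sq_nonneg _)

lemma rnorm_le_twoInf {n k : ℕ} (A : Matrix (Fin n) (Fin k) ℝ) (i : Fin n) :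
    rnorm (A i) ≤ twoInf A :=
  le_ciSup (f := fun i => rnorm (A i)) (Set.Finite.bddAbove (Set.finite_range _)) i

lemma twoInf_le_frob {n k : ℕ} (A : Matrix (Fin n) (Fin k) ℝ) : twoInf A ≤ frob A := by
  apply Real.iSup_le _ (frob_nonneg A)
  intro i
  apply Real.sqrt_le_sqrt
  exact Finset.single_le_sum (f := fun i => ∑ j, A i j ^ 2)
    (fun i _ => Finset.sum_nonneg fun _ _ => sq_nonneg _) (Finset.mem_univ i)

lemma frob_le_sqrt_mul_twoInf {n k : ℕ} (A : Matrix (Fin n) (Fin k) ℝ) :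
    frob A ≤ Real.sqrt n * twoInf A := by
  have h1 : frob A ≤ Real.sqrt (n * twoInf A ^ 2) := by
    apply Real.sqrt_le_sqrt
    calc ∑ i, ∑ j, A i j ^ 2 = ∑ i, rnorm (A i) ^ 2 := by simp [rnorm_sq]
      _ ≤ ∑ _i : Fin n, twoInf A ^ 2 := Finset.sum_le_sum fun i _ =>
          pow_le_pow_left₀ (rnorm_nonneg _) (rnorm_le_twoInf A i) 2
      _ = n * twoInf A ^ 2 := by simp [mul_comm]
  calc frob A ≤ Real.sqrt (n * twoInf A ^ 2) := h1
    _ = Real.sqrt n * twoInf A := by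
        rw [Real.sqrt_mul (by positivity), Real.sqrt_sq (twoInf_nonneg A)]

lemma frob_smul {n k : ℕ} (c : ℝ) (A : Matrix (Fin n) (Fin k) ℝ) :
    frob (c • A) = |c| * frob A := by
  unfold frob
  rw [← Real.sqrt_sq_eq_abs, ← Real.sqrt_mul (sq_nonneg c)]
  congr 1
  simp [Matrix.smul_apply, mul_pow, Finset.mul_sum]

lemma sum_sq_mulW {n m : ℕ} {W : Matrix (Fin n) (Fin m) ℝ} (hW : Wᵀ * W = 1)
    (a : Fin m → ℝ) : ∑ i, (∑ k, W i k * a k) ^ 2 = ∑ k, a k ^ 2 := by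
  have h : ∀ k l, ∑ i, W i k * W i l = if k = l then 1 else 0 := by
    intro k l
    have := congrFun (congrFun hW k) l
    simpa [Matrix.mul_apply, Matrix.one_apply, Matrix.transpose_apply] using this
  calc ∑ i, (∑ k, W i k * a k) ^ 2
      = ∑ i, ∑ k, ∑ p, (W i k * a k) * (W i p * a p) := by
        simp [sq, Finset.sum_mul_sum]
    _ = ∑ k, ∑ p, (a k * a p) * ∑ i, W i k * W i p := by
        rw [Finset.sum_comm]
        refine Finset.sum_congr rfl fun k _ => ?_
        rw [Finset.sum_comm]
        refine Finset.sum_congr rfl fun p _ => ?_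
        rw [Finset.mul_sum]
        exact Finset.sum_congr rfl fun i _ => by ring
    _ = ∑ k, a k ^ 2 := by
        simp only [h]
        simp [Finset.sum_ite_eq, sq]

lemma frob_W_mul {n m k : ℕ} {W : Matrix (Fin n) (Fin m) ℝ} (hW : Wᵀ * W = 1)
    (A : Matrix (Fin m) (Fin k) ℝ) : frob (W * A) = frob A := by
  unfold frob
  congr 1
  rw [Finset.sum_comm]
  rw [show ∑ i : Fin m, ∑ j : Fin k, A i j ^ 2 = ∑ j : Fin k, ∑ i : Fin m, A i j ^ 2 from
    Finset.sum_comm]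
  refine Finset.sum_congr rfl fun j _ => ?_
  simpa [Matrix.mul_apply] using sum_sq_mulW hW (fun p => A p j)


theorem stmt10 {l m n : ℕ} (B : Matrix (Fin l) (Fin l) ℝ) (C : Matrix (Fin m) (Fin m) ℝ)
    (W : Matrix (Fin n) (Fin m) ℝ) (hmn : m ≤ n) (hW : Wᵀ * W = 1) :
    (1 / Real.sqrt n) *
        sInf {r : ℝ | ∃ X : Matrix (Fin m) (Fin l) ℝ, frob X = 1 ∧
          r = frob (X * B - C * X)} ≤
      sInf {r : ℝ | ∃ X : Matrix (Fin m) (Fin l) ℝ, twoInf (W * X) = 1 ∧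
          r = twoInf (W * X * B - W * C * Wᵀ * (W * X))} := by
  have hRnn : (0:ℝ) ≤ sInf {r : ℝ | ∃ X : Matrix (Fin m) (Fin l) ℝ, twoInf (W * X) = 1 ∧
      r = twoInf (W * X * B - W * C * Wᵀ * (W * X))} := by
    apply Real.sInf_nonneg
    rintro r ⟨X, -, rfl⟩
    exact twoInf_nonneg _
  rcases Nat.eq_zero_or_pos m with hm | hm
  · have : {r : ℝ | ∃ X : Matrix (Fin m) (Fin l) ℝ, frob X = 1 ∧
        r = frob (X * B - C * X)} = ∅ := by
      ext r
      simp only [Set.mem_setOf_eq, Set.mem_empty_iff_false, iff_false, not_exists]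
      rintro X ⟨hX, -⟩
      subst hm
      simp [frob] at hX
    rw [this, Real.sInf_empty, mul_zero]
    exact hRnn
  rcases Nat.eq_zero_or_pos l with hl | hl
  · have : {r : ℝ | ∃ X : Matrix (Fin m) (Fin l) ℝ, frob X = 1 ∧
        r = frob (X * B - C * X)} = ∅ := by
      ext r
      simp only [Set.mem_setOf_eq, Set.mem_empty_iff_false, iff_false, not_exists]
      rintro X ⟨hX, -⟩
      subst hl
      simp [frob] at hX
    rw [this, Real.sInf_empty, mul_zero]
    exact hRnn
  -- main case
  have hn : 0 < n := lt_of_lt_of_le hm hmn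
  set k0 : Fin m := ⟨0, hm⟩
  set j0 : Fin l := ⟨0, hl⟩
  have hcol : ∑ i, W i k0 ^ 2 = 1 := by
    have := congrFun (congrFun hW k0) k0
    simpa [Matrix.mul_apply, Matrix.one_apply, sq] using this
  -- pick a maximizer of |W i k0|
  obtain ⟨i0, hi0⟩ := Finset.exists_max_image Finset.univ (fun i => |W i k0|)
    ⟨⟨0, hn⟩, Finset.mem_univ _⟩
  obtain ⟨-, hi0max⟩ := hi0
  have hi0pos : 0 < |W i0 k0| := by
    rcases eq_or_lt_of_le (abs_nonneg (W i0 k0)) with h | h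
    · exfalso
      have hz : ∀ i, W i k0 = 0 := fun i => by
        have := hi0max i (Finset.mem_univ i)
        rw [← h] at this
        exact abs_eq_zero.1 (le_antisymm this (abs_nonneg _))
      rw [Finset.sum_congr rfl (fun i _ => by rw [hz i])] at hcol
      simp at hcol
    · exact h
  -- RHS set nonempty
  set a : ℝ := |W i0 k0|⁻¹
  have ha : 0 < a := inv_pos.2 hi0pos
  set X0 : Matrix (Fin m) (Fin l) ℝ := fun p j => if p = k0 ∧ j = j0 then a else 0
  have hWX0 : ∀ i j, (W * X0) i j = if j = j0 then W i k0 * a else 0 := by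
    intro i j
    rw [Matrix.mul_apply]; simp only [X0]
    by_cases hj : j = j0 <;> simp [hj]
  have hrow : ∀ i, rnorm ((W * X0) i) = |W i k0| * a := by
    intro i
    unfold rnorm
    rw [Finset.sum_congr rfl fun j _ => by rw [hWX0 i j]]
    simp [ite_pow, Finset.sum_ite_eq', Real.sqrt_sq_eq_abs, abs_mul, abs_of_pos ha]
  have hT : twoInf (W * X0) = 1 := by
    unfold twoInf
    apply le_antisymm
    · apply Real.iSup_le _ zero_le_one
      intro i
      rw [hrow i]
      calc |W i k0| * a ≤ |W i0 k0| * a :=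
            mul_le_mul_of_nonneg_right (hi0max i (Finset.mem_univ i)) ha.le
        _ = 1 := by exact mul_inv_cancel₀ hi0pos.ne'
    · have h1 : rnorm ((W * X0) i0) = 1 := by
        rw [hrow i0]; exact mul_inv_cancel₀ hi0pos.ne'
      rw [← h1]
      exact le_ciSup (f := fun i => rnorm ((W * X0) i))
        (Set.Finite.bddAbove (Set.finite_range _)) i0
  have hRne : {r : ℝ | ∃ X : Matrix (Fin m) (Fin l) ℝ, twoInf (W * X) = 1 ∧
      r = twoInf (W * X * B - W * C * Wᵀ * (W * X))}.Nonempty :=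
    ⟨_, X0, hT, rfl⟩
  apply le_csInf hRne
  rintro r ⟨X, hXT, rfl⟩
  -- rewrite the residual
  have hres : W * X * B - W * C * Wᵀ * (W * X) = W * (X * B - C * X) := by
    have h2 : Wᵀ * (W * X) = X := by rw [← Matrix.mul_assoc, hW, Matrix.one_mul]
    rw [Matrix.mul_sub, Matrix.mul_assoc W X B, Matrix.mul_assoc (W * C) Wᵀ (W * X), h2,
      Matrix.mul_assoc]
  set t := frob X with ht
  have htW : frob (W * X) = t := frob_W_mul hW X
  have ht1 : 1 ≤ t := by
    rw [← hXT, ← htW]; exact twoInf_le_frob _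
  have htpos : 0 < t := lt_of_lt_of_le one_pos ht1
  have hmem : (t⁻¹ * frob (X * B - C * X)) ∈ {r : ℝ | ∃ X : Matrix (Fin m) (Fin l) ℝ,
      frob X = 1 ∧ r = frob (X * B - C * X)} := by
    refine ⟨t⁻¹ • X, ?_, ?_⟩
    · rw [frob_smul, abs_of_pos (inv_pos.2 htpos), ← ht, inv_mul_cancel₀ htpos.ne']
    · rw [show (t⁻¹ • X) * B - C * (t⁻¹ • X) = t⁻¹ • (X * B - C * X) by
        rw [Matrix.smul_mul, Matrix.mul_smul, smul_sub]]
      rw [frob_smul, abs_of_pos (inv_pos.2 htpos)]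
  have hbdd : BddBelow {r : ℝ | ∃ X : Matrix (Fin m) (Fin l) ℝ,
      frob X = 1 ∧ r = frob (X * B - C * X)} :=
    ⟨0, by rintro r ⟨X, -, rfl⟩; exact frob_nonneg _⟩
  have hle : sInf {r : ℝ | ∃ X : Matrix (Fin m) (Fin l) ℝ,
      frob X = 1 ∧ r = frob (X * B - C * X)} ≤ t⁻¹ * frob (X * B - C * X) :=
    csInf_le hbdd hmem
  have hchain : t⁻¹ * frob (X * B - C * X) ≤ Real.sqrt n * twoInf (W * X * B - W * C * Wᵀ * (W * X)) := by
    calc t⁻¹ * frob (X * B - C * X) ≤ 1 * frob (X * B - C * X) := by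
          apply mul_le_mul_of_nonneg_right _ (frob_nonneg _)
          rw [← inv_one]
          exact inv_anti₀ one_pos ht1
      _ = frob (W * (X * B - C * X)) := by rw [one_mul, frob_W_mul hW]
      _ = frob (W * X * B - W * C * Wᵀ * (W * X)) := by rw [hres]
      _ ≤ Real.sqrt n * twoInf (W * X * B - W * C * Wᵀ * (W * X)) := frob_le_sqrt_mul_twoInf _
  have hsn : 0 < Real.sqrt n := Real.sqrt_pos.2 (by exact_mod_cast hn)
  rw [div_mul_eq_mul_div, one_mul, div_le_iff₀ hsn]
  calc sInf _ ≤ t⁻¹ * frob (X * B - C * X) := hle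
    _ ≤ Real.sqrt n * twoInf (W * X * B - W * C * Wᵀ * (W * X)) := hchain
    _ = twoInf (W * X * B - W * C * Wᵀ * (W * X)) * Real.sqrt n := mul_comm _ _
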